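/- Let D be a digraph and S ⊆ V(D) such that every directed cycle of D contains at least two vertices of S. Let D_S be the digraph on S with an arc a → b whenever D has a directed path from a to b with all internal vertices outside S. Then every directed cycle of D induces a directed cycle in D_S, and conversely every directed cycle of D_S corresponds to a closed directed walk in D. In particular, if D_S has a cycle avoiding at least k vertices of S, then D has a directed cycle avoiding at least k vertices of S. -/

import Mathlib

/-- A directed cycle of length `m` in the digraph with arc relation `A`. -/
def IsCycleOn {V : Type*} (A : V → V → Prop) (m : ℕ) (c : ZMod m → V) : Prop :=
  2 ≤ m ∧ Function.Injective c ∧ ∀ i, A (c i) (c (i + 1))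

/-- The arc relation of the digraph `D_S` on vertex set `S`: there is an arc `a → b`
whenever `D` contains a directed path from `a` to `b` all of whose internal
vertices lie outside `S`. -/
def ContractArc {V : Type*} (A : V → V → Prop) (S : Set V) (a b : V) : Prop :=
  a ∈ S ∧ b ∈ S ∧ ∃ l : List V, (∀ v ∈ l, v ∉ S) ∧ List.Chain A a (l ++ [b])

private lemma aux_not_nodup_split {V : Type*} : ∀ {l : List V}, ¬ l.Nodup →
    ∃ x l1 l2 l3, l = l1 ++ x :: (l2 ++ x :: l3) := by
  intro l h
  induction l with
  | nil => simp at h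
  | cons y t ih =>
    by_cases hy : y ∈ t
    · obtain ⟨s1, s2, rfl⟩ := List.append_of_mem hy
      exact ⟨y, [], s1, s2, rfl⟩
    · have ht : ¬ t.Nodup := fun hn => h (List.nodup_cons.mpr ⟨hy, hn⟩)
      obtain ⟨x, l1, l2, l3, rfl⟩ := ih ht
      exact ⟨x, y :: l1, l2, l3, rfl⟩

private lemma aux_extract {V : Type*} (A : V → V → Prop) :
    ∀ (N : ℕ) (a : V) (l : List V), l.length ≤ N → List.Chain A a (l ++ [a]) →
    (∃ y z, y ∈ a :: l ∧ z ∈ a :: l ∧ y ≠ z) →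
    ∃ b t, List.Chain A b (t ++ [b]) ∧ (b :: t).Nodup ∧ 2 ≤ (b :: t).length ∧
      ∀ x ∈ b :: t, x ∈ a :: l := by
  intro N
  induction N with
  | zero =>
    intro a l hlen hch ⟨y, z, hy, hz, hne⟩
    obtain rfl : l = [] := List.length_eq_zero_iff.mp (Nat.le_zero.mp hlen)
    simp at hy hz
    exact absurd (hy.trans hz.symm) hne
  | succ N ih =>
    intro a l hlen hch hyz
    by_cases hnd : (a :: l).Nodup
    · refine ⟨a, l, hch, hnd, ?_, fun x hx => hx⟩
      obtain ⟨y, z, hy, hz, hne⟩ := hyz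
      match l with
      | [] => simp at hy hz; exact absurd (hy.trans hz.symm) hne
      | _ :: _ => simp
    · obtain ⟨x, l1, l2, l3, heq⟩ := aux_not_nodup_split hnd
      -- common finishing data: two closed walks (x, l2) and (b2, t2)
      have main : ∀ (b2 : V) (t2 : List V),
          List.Chain A x (l2 ++ [x]) → List.Chain A b2 (t2 ++ [b2]) →
          l2.length ≤ N → t2.length ≤ N →
          (∀ v ∈ x :: l2, v ∈ a :: l) → (∀ v ∈ b2 :: t2, v ∈ a :: l) →
          x ∈ b2 :: t2 →
          (∀ v ∈ a :: l, v ∈ x :: l2 ∨ v ∈ b2 :: t2) →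
          ∃ b t, List.Chain A b (t ++ [b]) ∧ (b :: t).Nodup ∧ 2 ≤ (b :: t).length ∧
            ∀ x ∈ b :: t, x ∈ a :: l := by
        intro b2 t2 hc1 hc2 hn1 hn2 hs1 hs2 hx2 hcover
        obtain ⟨y, z, hy, hz, hne⟩ := hyz
        rcases hcover y hy with hy1 | hy2 <;> rcases hcover z hz with hz1 | hz2
        · obtain ⟨b, t, p1, p2, p3, p4⟩ := ih x l2 hn1 hc1 ⟨y, z, hy1, hz1, hne⟩
          exact ⟨b, t, p1, p2, p3, fun v hv => hs1 v (p4 v hv)⟩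
        · by_cases hxz : x = z
          · subst hxz
            obtain ⟨b, t, p1, p2, p3, p4⟩ := ih x l2 hn1 hc1
              ⟨y, x, hy1, List.mem_cons_self, hne⟩
            exact ⟨b, t, p1, p2, p3, fun v hv => hs1 v (p4 v hv)⟩
          · obtain ⟨b, t, p1, p2, p3, p4⟩ := ih b2 t2 hn2 hc2 ⟨x, z, hx2, hz2, hxz⟩
            exact ⟨b, t, p1, p2, p3, fun v hv => hs2 v (p4 v hv)⟩
        · by_cases hxy : x = y
          · subst hxy
            obtain ⟨b, t, p1, p2, p3, p4⟩ := ih x l2 hn1 hc1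
              ⟨x, z, List.mem_cons_self, hz1, hne⟩
            exact ⟨b, t, p1, p2, p3, fun v hv => hs1 v (p4 v hv)⟩
          · obtain ⟨b, t, p1, p2, p3, p4⟩ := ih b2 t2 hn2 hc2 ⟨y, x, hy2, hx2, fun h => hxy h.symm⟩
            exact ⟨b, t, p1, p2, p3, fun v hv => hs2 v (p4 v hv)⟩
        · obtain ⟨b, t, p1, p2, p3, p4⟩ := ih b2 t2 hn2 hc2 ⟨y, z, hy2, hz2, hne⟩
          exact ⟨b, t, p1, p2, p3, fun v hv => hs2 v (p4 v hv)⟩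
      match l1, heq with
      | [], heq =>
        obtain ⟨rfl, hl⟩ : a = x ∧ l = l2 ++ x :: l3 := by
          simpa using heq
        subst hl
        have hch' : List.Chain A a (l2 ++ a :: (l3 ++ [a])) := by
          have e : (l2 ++ a :: l3) ++ [a] = l2 ++ a :: (l3 ++ [a]) := by simp
          rwa [e] at hch
        obtain ⟨h1, h2⟩ := List.isChain_cons_split.mp hch'
        have hlen2 : (l2 ++ a :: l3).length ≤ N + 1 := hlen
        simp [List.length_append] at hlen2
        refine main a l3 h1 h2 (by omega) (by omega) ?_ ?_ (List.mem_cons_self) ?_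
        · intro v hv; simp at hv ⊢; tauto
        · intro v hv; simp at hv ⊢; tauto
        · intro v hv; simp at hv ⊢; tauto
      | c :: l1', heq =>
        obtain ⟨rfl, hl⟩ : a = c ∧ l = l1' ++ x :: (l2 ++ x :: l3) := by
          simpa using heq
        subst hl
        have hch' : List.Chain A a (l1' ++ x :: (l2 ++ x :: (l3 ++ [a]))) := by
          have e : (l1' ++ x :: (l2 ++ x :: l3)) ++ [a]
              = l1' ++ x :: (l2 ++ x :: (l3 ++ [a])) := by simp
          rwa [e] at hch
        obtain ⟨h1, h2⟩ := List.isChain_cons_split.mp hch'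
        obtain ⟨h3, h4⟩ := List.isChain_cons_split.mp h2
        have hc2 : List.Chain A a ((l1' ++ x :: l3) ++ [a]) := by
          have e : (l1' ++ x :: l3) ++ [a] = l1' ++ x :: (l3 ++ [a]) := by simp
          rw [e]
          exact List.isChain_cons_split.mpr ⟨h1, h4⟩
        have hlen2 : (l1' ++ x :: (l2 ++ x :: l3)).length ≤ N + 1 := hlen
        simp [List.length_append] at hlen2
        refine main a (l1' ++ x :: l3) h3 hc2 (by omega) (by simp; omega) ?_ ?_ ?_ ?_
        · intro v hv; simp at hv ⊢; tauto
        · intro v hv; simp at hv ⊢; tauto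
        · simp
        · intro v hv; simp at hv ⊢; tauto

private lemma aux_listToCycle {V : Type*} (A : V → V → Prop) {b : V} {t : List V}
    (hch : List.Chain A b (t ++ [b])) (hnd : (b :: t).Nodup)
    (hlen : 2 ≤ (b :: t).length) :
    ∃ (n : ℕ) (c : ZMod n → V), IsCycleOn A n c ∧ Set.range c = {x | x ∈ b :: t} := by
  have hn2 : 2 ≤ (b :: t).length := hlen
  haveI : NeZero (b :: t).length := ⟨by omega⟩
  haveI : Fact (1 < (b :: t).length) := ⟨by omega⟩
  refine ⟨(b :: t).length, fun i => (b :: t).get ⟨i.val, ZMod.val_lt i⟩, ⟨hn2, ?_, ?_⟩, ?_⟩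
  · intro i j hij
    exact ZMod.val_injective _ (congrArg Fin.val (hnd.get_inj_iff.mp hij))
  · have hch' : List.Chain' A ((b :: t) ++ [b]) := hch
    have hget := List.isChain_iff_getElem.mp hch'
    intro i
    have hi : i.val < (b :: t).length := ZMod.val_lt i
    have hi' : i.val < t.length + 1 := by simpa using hi
    have hval : (i + 1).val = (i.val + 1) % (b :: t).length := by
      rw [ZMod.val_add, ZMod.val_one]
    have goal' : A ((b :: t).get ⟨i.val, hi⟩)
        ((b :: t).get ⟨(i.val + 1) % (b :: t).length,
          Nat.mod_lt _ (by omega)⟩) := by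
      have h1 := hget i.val (by simp; omega)
      rcases Nat.lt_or_ge (i.val + 1) (b :: t).length with h | h
      · have e1 : ((b :: t) ++ [b]).get ⟨i.val, by simp; omega⟩
            = (b :: t).get ⟨i.val, hi⟩ := List.getElem_append_left hi
        have e2 : ((b :: t) ++ [b]).get ⟨i.val + 1, by simp; omega⟩
            = (b :: t).get ⟨i.val + 1, h⟩ := List.getElem_append_left h
        simp only [List.get_eq_getElem] at e1 e2
        rw [e1, e2] at h1
        have hfin : (⟨(i.val + 1) % (b :: t).length, Nat.mod_lt _ (by omega)⟩ :
            Fin (b :: t).length) = ⟨i.val + 1, h⟩ := Fin.ext (Nat.mod_eq_of_lt h)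
        rw [hfin]
        exact h1
      · have heq : i.val + 1 = (b :: t).length := by simp at h ⊢; omega
        have e1 : ((b :: t) ++ [b]).get ⟨i.val, by simp; omega⟩
            = (b :: t).get ⟨i.val, hi⟩ := List.getElem_append_left hi
        have e2 : ((b :: t) ++ [b]).get ⟨i.val + 1, by simp; omega⟩
            = b := by
          have := List.getElem_append_right (i := i.val + 1)
            (as := b :: t) (bs := [b]) (by omega) (h₂ := by simp; omega)
          rw [List.get_eq_getElem, this]
          simp [heq]
        simp only [List.get_eq_getElem] at e1 e2
        rw [e1, e2] at h1
        have hfin : (⟨(i.val + 1) % (b :: t).length, Nat.mod_lt _ (by omega)⟩ :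
            Fin (b :: t).length) = ⟨0, by omega⟩ := by
          refine Fin.ext ?_
          simp only [heq, Nat.mod_self]
        rw [hfin]
        exact h1
    show A ((b :: t).get ⟨i.val, ZMod.val_lt i⟩)
      ((b :: t).get ⟨(i + 1).val, ZMod.val_lt (i + 1)⟩)
    have hfin : (⟨(i + 1).val, ZMod.val_lt (i + 1)⟩ : Fin (b :: t).length)
        = ⟨(i.val + 1) % (b :: t).length, Nat.mod_lt _ (by omega)⟩ := Fin.ext hval
    rw [hfin]
    exact goal'
  · ext x
    constructor
    · rintro ⟨i, rfl⟩
      exact List.get_mem _ _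
    · intro hx
      obtain ⟨⟨k, hk⟩, hget⟩ := List.mem_iff_get.mp hx
      refine ⟨(k : ZMod (b :: t).length), ?_⟩
      show (b :: t).get ⟨((k : ℕ) : ZMod (b :: t).length).val,
        ZMod.val_lt _⟩ = x
      have hfin : (⟨((k : ℕ) : ZMod (b :: t).length).val, ZMod.val_lt _⟩ :
          Fin (b :: t).length) = ⟨k, hk⟩ := Fin.ext (ZMod.val_cast_of_lt hk)
      rw [hfin]
      exact hget

private lemma aux_cycleToList {V : Type*} (A : V → V → Prop) {m : ℕ} {c : ZMod m → V}
    (h : IsCycleOn A m c) :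
    ∃ t, List.Chain A (c 0) (t ++ [c 0]) ∧ (c 0 :: t).Nodup ∧
      (∀ x, x ∈ c 0 :: t ↔ x ∈ Set.range c) := by
  obtain ⟨h2, hinj, hstep⟩ := h
  obtain ⟨m₀, rfl⟩ : ∃ k, m = k + 2 := ⟨m - 2, by omega⟩
  haveI : NeZero (m₀ + 2) := ⟨by omega⟩
  have key : c 0 :: List.ofFn (fun i : Fin (m₀ + 1) => c ((i.val + 1 : ℕ) : ZMod (m₀ + 2)))
      = List.ofFn (fun i : Fin (m₀ + 2) => c ((i.val : ℕ) : ZMod (m₀ + 2))) := by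
    rw [List.ofFn_succ]
    simp [Fin.val_succ]
  have hget : ∀ (i : ℕ) (h : i <
      ((List.ofFn (fun i : Fin (m₀ + 2) => c ((i.val : ℕ) : ZMod (m₀ + 2)))) ++ [c 0]).length),
      ((List.ofFn (fun i : Fin (m₀ + 2) => c ((i.val : ℕ) : ZMod (m₀ + 2)))) ++ [c 0]).get ⟨i, h⟩
        = c ((i : ℕ) : ZMod (m₀ + 2)) := by
    intro i h
    rcases Nat.lt_or_ge i (m₀ + 2) with hi | hi
    · rw [List.get_eq_getElem, List.getElem_append_left (by simp; omega),
        List.getElem_ofFn]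
    · have hieq : i = m₀ + 2 := by simp at h; omega
      subst hieq
      rw [List.get_eq_getElem, List.getElem_append_right (by simp)]
      simp [ZMod.natCast_self]
  have hchain : List.Chain' A
      ((List.ofFn (fun i : Fin (m₀ + 2) => c ((i.val : ℕ) : ZMod (m₀ + 2)))) ++ [c 0]) := by
    refine List.isChain_iff_getElem.mpr ?_
    intro i hi
    have hi' : i < m₀ + 2 := by simp at hi; omega
    have e1 := hget i (by simp; omega)
    have e2 := hget (i + 1) (by simp; omega)
    simp only [List.get_eq_getElem] at e1 e2
    rw [e1, e2]
    have hA := hstep ((i : ℕ) : ZMod (m₀ + 2))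
    have ecast : ((i : ℕ) : ZMod (m₀ + 2)) + 1 = ((i + 1 : ℕ) : ZMod (m₀ + 2)) := by
      push_cast; ring
    rwa [ecast] at hA
  refine ⟨List.ofFn (fun i : Fin (m₀ + 1) => c ((i.val + 1 : ℕ) : ZMod (m₀ + 2))), ?_, ?_, ?_⟩
  · have h' : List.Chain' A ((c 0 ::
        List.ofFn (fun i : Fin (m₀ + 1) => c ((i.val + 1 : ℕ) : ZMod (m₀ + 2)))) ++ [c 0]) := by
      rw [key]; exact hchain
    exact h'
  · rw [key, List.nodup_ofFn]
    intro i j hij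
    have hc := hinj hij
    have hi := ZMod.val_cast_of_lt i.isLt
    have hj := ZMod.val_cast_of_lt j.isLt
    exact Fin.ext (by rw [← hi, ← hj, hc])
  · intro x
    rw [key, List.mem_ofFn]
    constructor
    · rintro ⟨i, rfl⟩; exact ⟨_, rfl⟩
    · rintro ⟨z, rfl⟩
      exact ⟨⟨z.val, ZMod.val_lt z⟩, by simp [ZMod.natCast_rightInverse z]⟩

private lemma aux_filt {V : Type*} (A : V → V → Prop) (S : Set V) [DecidablePred (· ∈ S)] :
    ∀ (l : List V) (a b : V) (w : List V), a ∈ S → b ∈ S → (∀ v ∈ w, v ∉ S) →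
    List.Chain A a (w ++ (l ++ [b])) →
    List.Chain (ContractArc A S) a (l.filter (· ∈ S) ++ [b]) := by
  intro l
  induction l with
  | nil =>
    intro a b w ha hb hw hch
    simp only [List.filter_nil, List.nil_append]
    refine List.isChain_pair.mpr ?_
    exact ⟨ha, hb, w, hw, by simpa using hch⟩
  | cons v t ih =>
    intro a b w ha hb hw hch
    by_cases hv : v ∈ S
    · have hsplit : List.Chain A a (w ++ v :: (t ++ [b])) := by simpa using hch
      obtain ⟨h1, h2⟩ := List.isChain_cons_split.mp hsplit
      have harc : ContractArc A S a v := ⟨ha, hv, w, hw, h1⟩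
      have htail := ih v b [] hv hb (by simp) (by simp only [List.nil_append]; exact h2)
      simp only [List.filter_cons, decide_eq_true_eq]
      rw [if_pos hv]
      exact List.Chain.cons harc htail
    · simp only [List.filter_cons, decide_eq_true_eq]
      rw [if_neg hv]
      refine ih a b (w ++ [v]) ha hb ?_ ?_
      · intro x hx
        rcases List.mem_append.mp hx with h | h
        · exact hw x h
        · simp at h; subst h; exact hv
      · have : w ++ [v] ++ (t ++ [b]) = w ++ (v :: t ++ [b]) := by simp
        rw [this]
        exact hch

private lemma aux_walk {V : Type*} (A : V → V → Prop) (S : Set V) (f : ℕ → V)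
    (hf : ∀ i, ContractArc A S (f i) (f (i + 1))) :
    ∀ n, 1 ≤ n → ∃ l : List V, List.Chain A (f 0) (l ++ [f n]) ∧
      (∀ x ∈ l, x ∈ S → ∃ i, x = f i) ∧ (∀ i, 1 ≤ i → i < n → f i ∈ l) := by
  intro n
  induction n with
  | zero => omega
  | succ n ih =>
    intro _
    rcases Nat.lt_or_ge 0 n with hn | hn
    · obtain ⟨l, hch, hS, hmem⟩ := ih (by omega)
      obtain ⟨_, _, l'', hl'', hch''⟩ := hf n
      refine ⟨l ++ f n :: l'', ?_, ?_, ?_⟩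
      · have e : (l ++ f n :: l'') ++ [f (n + 1)] = l ++ f n :: (l'' ++ [f (n + 1)]) := by
          simp
        rw [e]
        exact List.isChain_cons_split.mpr ⟨hch, hch''⟩
      · intro x hx hxS
        rcases List.mem_append.mp hx with h | h
        · exact hS x h hxS
        · rcases List.mem_cons.mp h with h | h
          · exact ⟨n, h⟩
          · exact absurd hxS (hl'' x h)
      · intro i h1 h2
        rcases Nat.lt_or_ge i n with h | h
        · exact List.mem_append.mpr (Or.inl (hmem i h1 h))
        · have : i = n := by omega
          subst this
          exact List.mem_append.mpr (Or.inr (List.mem_cons_self))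
    · have hn0 : n = 0 := by omega
      subst hn0
      obtain ⟨_, _, l, hl, hch⟩ := hf 0
      exact ⟨l, hch, fun x hx hxS => absurd hxS (hl x hx), fun i h1 h2 => by omega⟩

/-- If every directed cycle of `D` contains at least two vertices of `S`, then every
directed cycle of `D` induces a directed cycle of `D_S` (on its `S`-vertices), and
conversely a cycle of `D_S` avoiding at least `k` vertices of `S` yields a directed
cycle of `D` avoiding at least `k` vertices of `S`. -/
theorem stmt_10 {V : Type*} [Fintype V] (A : V → V → Prop) (S : Set V)
    (hcyc : ∀ (m : ℕ) (c : ZMod m → V), IsCycleOn A m c →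
      ∃ i j : ZMod m, c i ≠ c j ∧ c i ∈ S ∧ c j ∈ S) :
    (∀ (m : ℕ) (c : ZMod m → V), IsCycleOn A m c →
      ∃ (m' : ℕ) (c' : ZMod m' → V), IsCycleOn (ContractArc A S) m' c' ∧
        Set.range c' = Set.range c ∩ S) ∧
    (∀ (k : ℕ) (m' : ℕ) (c' : ZMod m' → V), IsCycleOn (ContractArc A S) m' c' →
      k ≤ Nat.card {v : V // v ∈ S ∧ v ∉ Set.range c'} →
      ∃ (m : ℕ) (c : ZMod m → V), IsCycleOn A m c ∧
        k ≤ Nat.card {v : V // v ∈ S ∧ v ∉ Set.range c}) := by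
  classical
  constructor
  · -- Part 1
    intro m c hc
    obtain ⟨i0, j0, hne, hiS, hjS⟩ := hcyc m c hc
    obtain ⟨h2, hinj, hstep⟩ := hc
    set c₀ : ZMod m → V := fun z => c (z + i0) with hc₀
    have hcyc₀ : IsCycleOn A m c₀ := by
      refine ⟨h2, fun x y hxy => ?_, fun z => ?_⟩
      · exact add_right_cancel (hinj hxy)
      · have h := hstep (z + i0)
        have e : z + i0 + 1 = z + 1 + i0 := by ring
        rw [e] at h
        exact h
    have hrange : Set.range c₀ = Set.range c := by
      ext x
      constructor
      · rintro ⟨z, rfl⟩; exact ⟨z + i0, rfl⟩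
      · rintro ⟨z, rfl⟩; exact ⟨z - i0, by simp [hc₀]⟩
    have h0S : c₀ 0 ∈ S := by
      have : c₀ 0 = c i0 := by simp [hc₀]
      rw [this]; exact hiS
    obtain ⟨t, hch, hnd, hmem⟩ := aux_cycleToList A hcyc₀
    have hchF := aux_filt A S t (c₀ 0) (c₀ 0) [] h0S h0S (by simp) (by simpa using hch)
    have hndF : (c₀ 0 :: t.filter (· ∈ S)).Nodup :=
      List.Nodup.sublist (List.Sublist.cons₂ _ (List.filter_sublist (l := t))) hnd
    have hjF : c j0 ∈ t.filter (· ∈ S) := by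
      have hj0r : c j0 ∈ c₀ 0 :: t := (hmem _).mpr (hrange ▸ ⟨j0, rfl⟩)
      have hj0ne : c j0 ≠ c₀ 0 := by
        have : c₀ 0 = c i0 := by simp [hc₀]
        rw [this]
        exact fun h => hne h.symm
      rcases List.mem_cons.mp hj0r with h | h
      · exact absurd h hj0ne
      · exact List.mem_filter.mpr ⟨h, by simpa using hjS⟩
    have hlenF : 2 ≤ (c₀ 0 :: t.filter (· ∈ S)).length := by
      have := List.length_pos_iff.mpr (List.ne_nil_of_mem hjF)
      simp only [List.length_cons]
      omega
    obtain ⟨n', c', hcyc', hrange'⟩ := aux_listToCycle (ContractArc A S) hchF hndF hlenF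
    refine ⟨n', c', hcyc', ?_⟩
    rw [hrange']
    ext x
    simp only [Set.mem_setOf_eq, List.mem_cons, List.mem_filter, decide_eq_true_eq,
      Set.mem_inter_iff]
    constructor
    · rintro (rfl | ⟨hxt, hxS⟩)
      · exact ⟨hrange ▸ ⟨0, rfl⟩, h0S⟩
      · exact ⟨hrange ▸ ((hmem x).mp (List.mem_cons_of_mem _ hxt)), hxS⟩
    · rintro ⟨hxr, hxS⟩
      rcases List.mem_cons.mp ((hmem x).mpr (hrange ▸ hxr)) with h | h
      · exact Or.inl h
      · exact Or.inr ⟨h, hxS⟩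
  · -- Part 2
    intro k m' c' hc' hk
    obtain ⟨h2', hinj', hstep'⟩ := hc'
    haveI : NeZero m' := ⟨by omega⟩
    haveI : Fact (1 < m') := ⟨by omega⟩
    set f : ℕ → V := fun i => c' ((i : ℕ) : ZMod m') with hf
    have hfstep : ∀ i, ContractArc A S (f i) (f (i + 1)) := by
      intro i
      have h := hstep' ((i : ℕ) : ZMod m')
      have e : ((i : ℕ) : ZMod m') + 1 = ((i + 1 : ℕ) : ZMod m') := by push_cast; ring
      rw [e] at h
      exact h
    obtain ⟨l, hch, hS, hmem⟩ := aux_walk A S f hfstep m' (by omega)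
    have hfm : f m' = f 0 := by simp [hf, ZMod.natCast_self]
    rw [hfm] at hch
    have h01 : f 0 ≠ f 1 := by
      simp only [hf, Nat.cast_zero, Nat.cast_one]
      intro h
      exact zero_ne_one (hinj' h)
    obtain ⟨b, t, hchb, hndb, hlenb, hsubb⟩ := aux_extract A l.length (f 0) l le_rfl hch
      ⟨f 0, f 1, List.mem_cons_self,
        List.mem_cons_of_mem _ (hmem 1 le_rfl (by omega)), h01⟩
    obtain ⟨n, c, hcycn, hrangen⟩ := aux_listToCycle A hchb hndb hlenb
    refine ⟨n, c, hcycn, le_trans hk ?_⟩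
    have hincl : ∀ v, v ∈ S → v ∉ Set.range c' → v ∉ Set.range c := by
      intro v hvS hvc' hvc
      rw [hrangen] at hvc
      have hv : v ∈ f 0 :: l := hsubb v hvc
      rcases List.mem_cons.mp hv with h | h
      · exact hvc' ⟨_, h.symm⟩
      · obtain ⟨i, hi⟩ := hS v h hvS
        exact hvc' ⟨_, hi.symm⟩
    exact Nat.card_le_card_of_injective
      (fun x => (⟨x.1, x.2.1, hincl x.1 x.2.1 x.2.2⟩ :
        {v : V // v ∈ S ∧ v ∉ Set.range c}))
      (by intro x y h; cases x; cases y; simpa using h)
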